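/- Let N be an odd positive integer and define d : ℤ/N → ℝ by d_n = (1/N)·cot(πn/(2N)) if n is odd, and d_n = −(1/N)·tan(πn/(2N)) if n is even, where n is represented by an integer in {0,…,N−1} (with d_0 = 0). Then the discrete Fourier transform of d satisfies (F d)_k = −i·sgn~(k), where sgn~(k) = 0 if k = 0, sgn~(k) = 1 if 1 ≤ k ≤ (N−1)/2, and sgn~(k) = −1 if (N+1)/2 ≤ k ≤ N−1. -/

import Mathlib

open Finset

/-- The kernel of the discrete Hilbert transform for odd `N`. -/
noncomputable def benjaminKernel (N : ℕ) (n : ZMod N) : ℝ :=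
  if Odd n.val then (1 / (N : ℝ)) * Real.cot (Real.pi * (n.val : ℝ) / (2 * (N : ℝ)))
  else -(1 / (N : ℝ)) * Real.tan (Real.pi * (n.val : ℝ) / (2 * (N : ℝ)))

/-- The discrete sign symbol for odd `N`. -/
def sgnTilde (N : ℕ) (k : ZMod N) : ℝ :=
  if k.val = 0 then 0 else if k.val ≤ (N - 1) / 2 then 1 else -1

/-- The discrete Fourier transform of `u : ZMod N → ℂ`. -/
noncomputable def dft (N : ℕ) [NeZero N] (u : ZMod N → ℂ) (k : ZMod N) : ℂ :=
  ∑ n : ZMod N, u n * Complex.exp (-2 * Real.pi * Complex.I * (n.val : ℂ) * (k.val : ℂ) / (N : ℂ))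

/-- Telescoping sine sum. -/
lemma sin_telescope (θ : ℝ) (M : ℕ) :
    (∑ j ∈ range M, Real.sin ((j + 1) * θ)) * (2 * Real.sin (θ / 2))
      = Real.cos (θ / 2) - Real.cos (θ / 2 + M * θ) := by
  have key : ∀ j : ℕ, Real.sin ((j + 1) * θ) * (2 * Real.sin (θ / 2))
      = Real.cos (θ / 2 + j * θ) - Real.cos (θ / 2 + (j + 1) * θ) := by
    intro j
    rw [Real.cos_sub_cos]
    have h1 : (θ / 2 + j * θ + (θ / 2 + (j + 1) * θ)) / 2 = (j + 1) * θ := by ring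
    have h2 : (θ / 2 + j * θ - (θ / 2 + (j + 1) * θ)) / 2 = -(θ / 2) := by ring
    rw [h1, h2, Real.sin_neg]
    ring
  rw [Finset.sum_mul]
  calc ∑ j ∈ range M, Real.sin ((j + 1) * θ) * (2 * Real.sin (θ / 2))
      = ∑ j ∈ range M, ((fun j : ℕ => Real.cos (θ / 2 + j * θ)) j
          - (fun j : ℕ => Real.cos (θ / 2 + j * θ)) (j + 1)) := by
        refine Finset.sum_congr rfl fun j _ => ?_
        simpa using key j
    _ = Real.cos (θ / 2 + (0 : ℕ) * θ) - Real.cos (θ / 2 + M * θ) :=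
        Finset.sum_range_sub' (fun j : ℕ => Real.cos (θ / 2 + j * θ)) M
    _ = Real.cos (θ / 2) - Real.cos (θ / 2 + M * θ) := by norm_num

/-- The key real trigonometric evaluation. -/
lemma key_sum (N M : ℕ) (hNM : N = 2 * M + 1) (m : ℕ) (hm : m < N) :
    2 * ∑ j ∈ range M, Real.sin ((j + 1) * (2 * Real.pi * m / N))
      = if Odd m then Real.cot (Real.pi * m / (2 * N))
        else -Real.tan (Real.pi * m / (2 * N)) := by
  have hNpos : 0 < N := by omega
  have hN0 : (N : ℝ) ≠ 0 := Nat.cast_ne_zero.mpr hNpos.ne'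
  rcases Nat.eq_zero_or_pos m with hm0 | hm1
  · subst hm0
    simp [Real.tan_zero]
  set b : ℝ := Real.pi * m / (2 * N) with hb
  have hmpos : (0 : ℝ) < m := by exact_mod_cast hm1
  have hbpos : 0 < b := by
    rw [hb]
    have := Real.pi_pos
    positivity
  have hblt : b < Real.pi / 2 := by
    rw [hb, div_lt_div_iff₀ (by positivity) (by norm_num)]
    have hmN : (m : ℝ) < N := by exact_mod_cast hm
    nlinarith [Real.pi_pos]
  have hsinb : 0 < Real.sin b := Real.sin_pos_of_pos_of_lt_pi hbpos
    (lt_trans hblt (by linarith [Real.pi_pos]))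
  have hcosb : 0 < Real.cos b := Real.cos_pos_of_mem_Ioo ⟨by linarith [Real.pi_pos], hblt⟩
  set θ : ℝ := 2 * Real.pi * m / N with hθ
  have hθ2 : θ / 2 = 2 * b := by rw [hθ, hb]; ring
  have hNc : (N : ℝ) = 2 * M + 1 := by exact_mod_cast hNM
  have hMθ : 2 * b + M * θ = m * Real.pi := by
    rw [hb, hθ, hNc]
    have h21 : (2 * (M : ℝ) + 1) ≠ 0 := by positivity
    field_simp
    ring
  have htel := sin_telescope θ M
  rw [hθ2, hMθ] at htel
  have hcosMpi : Real.cos (m * Real.pi) = (-1) ^ m := by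
    simpa using Real.cos_nat_mul_pi_sub 0 m
  rw [hcosMpi, Real.sin_two_mul, Real.cos_two_mul] at htel
  set S : ℝ := ∑ j ∈ range M, Real.sin ((j + 1) * θ) with hS
  rcases Nat.even_or_odd m with he | ho
  · rw [if_neg (by simpa using he)]
    have hpow : ((-1 : ℝ)) ^ m = 1 := he.neg_one_pow
    rw [hpow] at htel
    have h3 : (2 * S * Real.cos b) * (2 * Real.sin b) = (-Real.sin b) * (2 * Real.sin b) := by
      linear_combination htel + 2 * Real.sin_sq_add_cos_sq b
    have hgoal : 2 * S * Real.cos b = -Real.sin b :=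
      mul_right_cancel₀ (by positivity : (2 : ℝ) * Real.sin b ≠ 0) h3
    rw [Real.tan_eq_sin_div_cos]
    field_simp
    linarith [hgoal]
  · rw [if_pos ho]
    have hpow : ((-1 : ℝ)) ^ m = -1 := ho.neg_one_pow
    rw [hpow] at htel
    have h3 : (2 * S * Real.sin b) * (2 * Real.cos b) = (Real.cos b) * (2 * Real.cos b) := by
      linear_combination htel
    have hgoal : 2 * S * Real.sin b = Real.cos b :=
      mul_right_cancel₀ (by positivity : (2 : ℝ) * Real.cos b ≠ 0) h3
    rw [Real.cot_eq_cos_div_sin]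
    field_simp
    linarith [hgoal]

/-- Orthogonality of characters. -/
lemma orth (N : ℕ) (hN : 0 < N) (c : ℤ) (hc : c.natAbs < N) :
    ∑ m ∈ range N, Complex.exp (2 * Real.pi * Complex.I * m * c / N)
      = if c = 0 then (N : ℂ) else 0 := by
  have hN0 : (N : ℂ) ≠ 0 := Nat.cast_ne_zero.mpr hN.ne'
  set r : ℂ := Complex.exp (2 * Real.pi * Complex.I * c / N) with hr
  have hterm : ∀ m : ℕ, Complex.exp (2 * Real.pi * Complex.I * m * c / N) = r ^ m := by
    intro m
    rw [hr, ← Complex.exp_nat_mul]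
    congr 1
    ring
  rw [Finset.sum_congr rfl fun m _ => hterm m]
  by_cases hc0 : c = 0
  · subst hc0
    simp [hr]
  · rw [if_neg hc0]
    have hrN : r ^ N = 1 := by
      rw [hr, ← Complex.exp_nat_mul]
      have harg : (N : ℂ) * (2 * Real.pi * Complex.I * c / N) = c * (2 * Real.pi * Complex.I) := by
        field_simp
      rw [harg]
      exact Complex.exp_int_mul_two_pi_mul_I c
    have hr1 : r ≠ 1 := by
      intro h
      rw [hr, Complex.exp_eq_one_iff] at h
      obtain ⟨n, hn⟩ := h
      have hpi : (2 : ℂ) * Real.pi * Complex.I ≠ 0 := by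
        simp [Complex.I_ne_zero, Real.pi_ne_zero, Complex.ofReal_ne_zero]
      rw [div_eq_iff hN0] at hn
      have h2 : (2 * (Real.pi : ℂ) * Complex.I) * (c : ℂ)
          = (2 * (Real.pi : ℂ) * Complex.I) * ((n : ℂ) * N) := by linear_combination hn
      have h3 : (c : ℂ) = (n : ℂ) * (N : ℂ) := mul_left_cancel₀ hpi h2
      have h4 : c = n * (N : ℤ) := by exact_mod_cast h3
      rcases eq_or_ne n 0 with h5 | h5
      · exact hc0 (by simp [h5] at h4; exact h4)
      · have h6 : 1 ≤ n.natAbs := Int.natAbs_pos.mpr h5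
        have h7 : c.natAbs = n.natAbs * N := by
          rw [h4, Int.natAbs_mul, Int.natAbs_natCast]
        nlinarith [hc]
    rw [geom_sum_eq hr1, hrN]
    simp

lemma exp_diff (x : ℝ) :
    -Complex.I * Complex.exp ((x : ℂ) * Complex.I)
      + Complex.I * Complex.exp (-((x : ℂ) * Complex.I))
      = ((2 * Real.sin x : ℝ) : ℂ) := by
  rw [show -((x : ℂ) * Complex.I) = ((-x : ℂ) * Complex.I) by ring,
    Complex.exp_mul_I, Complex.exp_mul_I, Complex.cos_neg, Complex.sin_neg]
  push_cast [Complex.ofReal_sin]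
  linear_combination (-2 * Complex.sin (x : ℂ)) * Complex.I_sq

/-- Step 1: the kernel as an inverse Fourier sum. -/
lemma step1 (N M : ℕ) [NeZero N] (hNM : N = 2 * M + 1) (m : ℕ) (hm : m < N) :
    (N : ℂ) * ((benjaminKernel N (m : ZMod N) : ℝ) : ℂ)
      = ∑ j ∈ range N, (-Complex.I * (if j = 0 then (0 : ℂ) else if j ≤ M then 1 else -1))
          * Complex.exp (2 * Real.pi * Complex.I * m * j / N) := by
  have hNpos : 0 < N := by omega
  have hN0 : (N : ℝ) ≠ 0 := Nat.cast_ne_zero.mpr hNpos.ne'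
  have hN0' : (N : ℂ) ≠ 0 := Nat.cast_ne_zero.mpr hNpos.ne'
  set f : ℕ → ℂ := fun j => (-Complex.I * (if j = 0 then (0 : ℂ) else if j ≤ M then 1 else -1))
          * Complex.exp (2 * Real.pi * Complex.I * m * j / N) with hf
  have hMN : M + 1 ≤ N := by omega
  have hsum : ∑ j ∈ range N, f j
      = ∑ j ∈ Ico 0 1, f j + ∑ j ∈ Ico 1 (M + 1), f j + ∑ j ∈ Ico (M + 1) N, f j := by
    rw [Finset.range_eq_Ico, ← Finset.sum_Ico_consecutive f (by omega : (0 : ℕ) ≤ M + 1) hMN,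
      ← Finset.sum_Ico_consecutive f (by omega : (0 : ℕ) ≤ 1) (by omega : (1 : ℕ) ≤ M + 1)]
  have h0 : ∑ j ∈ Ico 0 1, f j = 0 := by simp [hf]
  have harg : ∀ j : ℕ, (2 * (Real.pi : ℂ) * Complex.I * m * j / N)
      = ((2 * Real.pi * m * j / N : ℝ) : ℂ) * Complex.I := by
    intro j; push_cast; ring
  have hsecond : ∑ j ∈ Ico (M + 1) N, f j
      = ∑ j ∈ Ico 1 (M + 1),
          Complex.I * Complex.exp (-(((2 * Real.pi * m * j / N : ℝ) : ℂ) * Complex.I)) := by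
    refine (Finset.sum_nbij' (i := fun j => N - j) (j := fun j => N - j) ?_ ?_ ?_ ?_ ?_).symm
    · intro j hj; simp only [Finset.mem_Ico] at hj ⊢; omega
    · intro j hj; simp only [Finset.mem_Ico] at hj ⊢; omega
    · intro j hj; simp only [Finset.mem_Ico] at hj; show N - (N - j) = j; omega
    · intro j hj; simp only [Finset.mem_Ico] at hj; show N - (N - j) = j; omega
    · intro j hj
      simp only [Finset.mem_Ico] at hj
      refine Eq.symm ?_
      show f (N - j) = _
      have hj0 : N - j ≠ 0 := by omega
      have hjM : ¬(N - j ≤ M) := by omega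
      rw [hf]
      simp only [if_neg hj0, if_neg hjM]
      have hcast : ((N - j : ℕ) : ℂ) = (N : ℂ) - j := by
        push_cast [Nat.cast_sub (by omega : j ≤ N)]; ring
      rw [hcast]
      have hexp : Complex.exp (2 * Real.pi * Complex.I * m * ((N : ℂ) - j) / N)
          = Complex.exp ((m : ℂ) * (2 * Real.pi * Complex.I))
            * Complex.exp (-(((2 * Real.pi * m * j / N : ℝ) : ℂ) * Complex.I)) := by
        rw [← Complex.exp_add]
        congr 1
        push_cast
        field_simp
        ring
      rw [hexp]
      have h1 : Complex.exp ((m : ℂ) * (2 * Real.pi * Complex.I)) = 1 := by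
        exact_mod_cast Complex.exp_int_mul_two_pi_mul_I (m : ℤ)
      rw [h1]
      ring
  have hfirst : ∑ j ∈ Ico 1 (M + 1), f j
      = ∑ j ∈ Ico 1 (M + 1),
          -Complex.I * Complex.exp (((2 * Real.pi * m * j / N : ℝ) : ℂ) * Complex.I) := by
    refine Finset.sum_congr rfl fun j hj => ?_
    simp only [Finset.mem_Ico] at hj
    rw [hf]
    simp only [if_neg (by omega : j ≠ 0), if_pos (by omega : j ≤ M), harg j]
    ring
  rw [hsum, h0, hfirst, hsecond, zero_add, ← Finset.sum_add_distrib]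
  have hterm : ∀ j : ℕ,
      -Complex.I * Complex.exp (((2 * Real.pi * m * j / N : ℝ) : ℂ) * Complex.I)
        + Complex.I * Complex.exp (-(((2 * Real.pi * m * j / N : ℝ) : ℂ) * Complex.I))
      = ((2 * Real.sin (2 * Real.pi * m * j / N) : ℝ) : ℂ) := fun j => exp_diff _
  rw [Finset.sum_congr rfl fun j _ => hterm j, ← Complex.ofReal_sum]
  rw [show ((N : ℂ)) = ((N : ℝ) : ℂ) by push_cast; rfl, ← Complex.ofReal_mul]
  congr 1
  -- now a real identity
  rw [Finset.sum_Ico_eq_sum_range]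
  simp only [Nat.add_sub_cancel]
  have hsin : ∀ i : ℕ, 2 * Real.sin (2 * Real.pi * m * (1 + i : ℕ) / N)
      = 2 * Real.sin ((i + 1) * (2 * Real.pi * m / N)) := by
    intro i
    congr 2
    push_cast
    ring
  rw [Finset.sum_congr rfl fun i _ => hsin i, ← Finset.mul_sum, key_sum N M hNM m hm]
  have hval : ((m : ZMod N)).val = m := ZMod.val_cast_of_lt hm
  rw [benjaminKernel, hval]
  split_ifs with h
  · field_simp
  · field_simp

theorem dft_benjaminKernel (N : ℕ) [NeZero N] (hN : Odd N) (k : ZMod N) :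
    dft N (fun n => ((benjaminKernel N n : ℝ) : ℂ)) k = -Complex.I * (sgnTilde N k : ℂ) := by
  obtain ⟨M, hNM⟩ := hN
  have hNM : N = 2 * M + 1 := by omega
  have hNpos : 0 < N := by omega
  have hN0 : (N : ℂ) ≠ 0 := Nat.cast_ne_zero.mpr hNpos.ne'
  set k' : ℕ := k.val with hk'
  have hk'N : k' < N := ZMod.val_lt k
  rw [dft]
  have hzsum : ∀ F : ℕ → ℂ, (∑ n : ZMod N, F n.val) = ∑ m ∈ range N, F m := by
    intro F
    refine Finset.sum_nbij' (i := fun n : ZMod N => n.val)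
      (j := fun m : ℕ => (m : ZMod N)) ?_ ?_ ?_ ?_ ?_
    · intro n _; exact Finset.mem_range.mpr (ZMod.val_lt n)
    · intro m _; exact Finset.mem_univ _
    · intro n _; exact ZMod.natCast_rightInverse n
    · intro m hm; exact ZMod.val_cast_of_lt (Finset.mem_range.mp hm)
    · intro n _; rfl
  have hstep0 : (∑ n : ZMod N, ((benjaminKernel N n : ℝ) : ℂ)
        * Complex.exp (-2 * Real.pi * Complex.I * (n.val : ℂ) * (k' : ℂ) / N))
      = ∑ m ∈ range N, ((benjaminKernel N (m : ZMod N) : ℝ) : ℂ)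
        * Complex.exp (-2 * Real.pi * Complex.I * (m : ℂ) * (k' : ℂ) / N) := by
    rw [← hzsum (fun m => ((benjaminKernel N (m : ZMod N) : ℝ) : ℂ)
        * Complex.exp (-2 * Real.pi * Complex.I * (m : ℂ) * (k' : ℂ) / N))]
    refine Finset.sum_congr rfl fun n _ => ?_
    rw [ZMod.natCast_rightInverse n]
  rw [hstep0]
  have hstep1 : ∀ m ∈ range N, ((benjaminKernel N (m : ZMod N) : ℝ) : ℂ)
        * Complex.exp (-2 * Real.pi * Complex.I * (m : ℂ) * (k' : ℂ) / N)
      = (1 / N) * ∑ j ∈ range N,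
          (-Complex.I * (if j = 0 then (0 : ℂ) else if j ≤ M then 1 else -1))
            * Complex.exp (2 * Real.pi * Complex.I * m * (((j : ℤ) - (k' : ℤ) : ℤ) : ℂ) / N) := by
    intro m hm
    have hb : ((benjaminKernel N (m : ZMod N) : ℝ) : ℂ)
        = (1 / N) * ∑ j ∈ range N,
            (-Complex.I * (if j = 0 then (0 : ℂ) else if j ≤ M then 1 else -1))
              * Complex.exp (2 * Real.pi * Complex.I * m * j / N) := by
      rw [← step1 N M hNM m (Finset.mem_range.mp hm)]
      field_simp
    rw [hb, mul_assoc, Finset.sum_mul]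
    congr 1
    refine Finset.sum_congr rfl fun j _ => ?_
    rw [mul_assoc, ← Complex.exp_add]
    congr 2
    push_cast
    ring
  rw [Finset.sum_congr rfl hstep1, ← Finset.mul_sum]
  rw [Finset.sum_comm]
  have horth : ∀ j ∈ range N, (∑ m ∈ range N,
      (-Complex.I * (if j = 0 then (0 : ℂ) else if j ≤ M then 1 else -1))
        * Complex.exp (2 * Real.pi * Complex.I * m * (((j : ℤ) - (k' : ℤ) : ℤ) : ℂ) / N))
      = (-Complex.I * (if j = 0 then (0 : ℂ) else if j ≤ M then 1 else -1))
        * (if j = k' then (N : ℂ) else 0) := by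
    intro j hj
    have hjN : j < N := Finset.mem_range.mp hj
    rw [← Finset.mul_sum, orth N hNpos ((j : ℤ) - (k' : ℤ)) (by omega)]
    congr 1
    have hiff : ((j : ℤ) - (k' : ℤ) = 0) ↔ (j = k') := by omega
    simp only [hiff]
  rw [Finset.sum_congr rfl horth, Finset.sum_eq_single k'
    (fun b _ hb => by simp [hb]) (fun h => absurd (Finset.mem_range.mpr hk'N) h)]
  rw [if_pos rfl]
  have hM2 : (N - 1) / 2 = M := by omega
  have hs : ((if k' = 0 then (0 : ℂ) else if k' ≤ M then 1 else -1))
      = ((sgnTilde N k : ℝ) : ℂ) := by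
    rw [sgnTilde, hM2, ← hk']
    split_ifs <;> simp
  rw [hs]
  field_simp
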